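/- For every natural number k, dual(bestCase(k)) = worstCase(k); that is, the duality involution maps the best-case (minimal representation complexity for its value, tower-of-exponents-sized) number of representation size k to the worst-case number of representation size k. -/

import Mathlib

/-- The pairing function `c`. -/
def c (i j : ℕ) : ℕ := if Odd j then 2 ^ (i + 1) * j else 2 ^ (i + 1) * (j + 1) - 1

/-- The inverse of `c` on positive naturals (returns `(0,0)` at `0`). -/
def c' (n : ℕ) : ℕ × ℕ :=
  (padicValNat 2 (n + n % 2) - 1, (n + n % 2) / 2 ^ padicValNat 2 (n + n % 2) - n % 2)

lemma c'_fst_lt {n : ℕ} (hn : 0 < n) : (c' n).1 < n := by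
  have hm : 0 < n + n % 2 := by omega
  have hdvd : (2 : ℕ) ^ padicValNat 2 (n + n % 2) ∣ (n + n % 2) := pow_padicValNat_dvd
  have hle : (2 : ℕ) ^ padicValNat 2 (n + n % 2) ≤ n + n % 2 := Nat.le_of_dvd hm hdvd
  have hlt : padicValNat 2 (n + n % 2) < 2 ^ padicValNat 2 (n + n % 2) := by first | exact Nat.lt_two_pow_self | exact Nat.lt_two_pow_self _
  simp only [c']
  generalize hv : padicValNat 2 (n + n % 2) = v at *
  generalize hp : (2 : ℕ) ^ v = p at *
  omega

lemma c'_snd_lt {n : ℕ} (hn : 0 < n) : (c' n).2 < n := by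
  have hm : 0 < n + n % 2 := by omega
  have h2 : (2 : ℕ) ∣ (n + n % 2) := by omega
  have hv : 1 ≤ padicValNat 2 (n + n % 2) := one_le_padicValNat_of_dvd hm.ne' h2
  have h2le : (2 : ℕ) ≤ 2 ^ padicValNat 2 (n + n % 2) := by
    calc (2:ℕ) = 2 ^ 1 := (pow_one 2).symm
    _ ≤ 2 ^ padicValNat 2 (n + n % 2) := Nat.pow_le_pow_right (by norm_num) hv
  have hle : (n + n % 2) / 2 ^ padicValNat 2 (n + n % 2) ≤ (n + n % 2) / 2 :=
    Nat.div_le_div_left h2le (by norm_num)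
  simp only [c']
  generalize hq : (n + n % 2) / 2 ^ padicValNat 2 (n + n % 2) = q at *
  omega

lemma c'_fst_lt_of_lt {m n : ℕ} (h : m < n) : (c' m).1 < n := by
  rcases Nat.eq_zero_or_pos m with rfl | hm
  · simp [c']; omega
  · exact lt_trans (c'_fst_lt hm) h

lemma c'_snd_lt_of_lt {m n : ℕ} (h : m < n) : (c' m).2 < n := by
  rcases Nat.eq_zero_or_pos m with rfl | hm
  · simp [c']; omega
  · exact lt_trans (c'_snd_lt hm) h

def dual : ℕ → ℕ
  | 0 => 0
  | n + 1 => c (dual (c' (n + 1)).2) (dual (c' (n + 1)).1)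
  decreasing_by
  · exact c'_snd_lt (Nat.succ_pos n)
  · exact c'_fst_lt (Nat.succ_pos n)

/-- best case: iterated `x ↦ c x 0` (towers of exponents). -/
def bestCase (k : ℕ) : ℕ := (fun x => c x 0)^[k] 0

/-- worst case: iterated `x ↦ c 0 x`. -/
def worstCase (k : ℕ) : ℕ := (fun x => c 0 x)^[k] 0

lemma val_mul_odd {i m : ℕ} (hm : Odd m) : padicValNat 2 (2 ^ (i+1) * m) = i + 1 := by
  haveI : Fact (Nat.Prime 2) := ⟨Nat.prime_two⟩
  rw [Nat.odd_iff] at hm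
  rw [padicValNat.mul (by positivity) (by omega), padicValNat.prime_pow,
    padicValNat.eq_zero_of_not_dvd (by omega : ¬ 2 ∣ m), add_zero]

lemma c_pos (i j : ℕ) : 0 < c i j := by
  unfold c
  have h1 : (2:ℕ) ≤ 2 ^ (i+1) := le_self_pow₀ (by norm_num) (Nat.succ_ne_zero i)
  split
  · rename_i h; rw [Nat.odd_iff] at h
    exact Nat.mul_pos (by positivity) (by omega)
  · have h2 : 2 * 1 ≤ 2 ^ (i+1) * (j+1) := Nat.mul_le_mul h1 (by omega)
    omega

lemma c'_c (i j : ℕ) : c' (c i j) = (i, j) := by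
  unfold c c'
  by_cases hj : Odd j
  · have hjo := hj
    rw [Nat.odd_iff] at hjo
    have hmod : 2 ^ (i+1) * j % 2 = 0 := by
      have : 2 ∣ 2 ^ (i+1) * j := Dvd.dvd.mul_right (dvd_pow_self 2 (Nat.succ_ne_zero i)) j
      omega
    simp only [if_pos hj, hmod, add_zero, Nat.sub_zero, val_mul_odd hj]
    rw [Nat.mul_div_cancel_left _ (by positivity)]
    simp
  · have hj1 : Odd (j + 1) := by rw [Nat.odd_iff] at *; omega
    have hpos : 1 ≤ 2 ^ (i+1) * (j+1) := Nat.one_le_iff_ne_zero.2 (by positivity)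
    have heven : 2 ^ (i+1) * (j+1) % 2 = 0 := by
      have : 2 ∣ 2 ^ (i+1) * (j+1) := Dvd.dvd.mul_right (dvd_pow_self 2 (Nat.succ_ne_zero i)) _
      omega
    have hmod : (2 ^ (i+1) * (j+1) - 1) % 2 = 1 := by omega
    simp only [if_neg hj, hmod]
    have hsum : 2 ^ (i+1) * (j+1) - 1 + 1 = 2 ^ (i+1) * (j+1) := by omega
    rw [hsum, val_mul_odd hj1, Nat.mul_div_cancel_left _ (by positivity)]
    simp

lemma dual_zero : dual 0 = 0 := by rw [dual]

lemma dual_c (i j : ℕ) : dual (c i j) = c (dual j) (dual i) := by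
  obtain ⟨n, hn⟩ := Nat.exists_eq_succ_of_ne_zero (c_pos i j).ne'
  have hn2 : n + 1 = c i j := by omega
  rw [hn, dual, hn2, c'_c]

theorem dual_bestCase_eq_worstCase (k : ℕ) : dual (bestCase k) = worstCase k := by
  induction k with
  | zero => simpa [bestCase, worstCase] using dual_zero
  | succ k ih =>
    have hb : bestCase (k+1) = c (bestCase k) 0 := Function.iterate_succ_apply' _ k 0
    have hw : worstCase (k+1) = c 0 (worstCase k) := Function.iterate_succ_apply' _ k 0
    rw [hb, dual_c, dual_zero, ih, hw]
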